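/- Let D ∈ ℝ^{m×p} have unit-norm columns and coherence μ with k·μ < 1. Then for any J with |J| ≤ k, every off-diagonal entry of Θ_J = (D_Jᵀ D_J)^{-1} satisfies |[Θ_J]_{ij}| ≤ μ/(1 − kμ) for i ≠ j, and every off-diagonal entry of Θ_J² satisfies |[Θ_J²]_{ij}| ≤ 2μ/(1 − kμ)² for i ≠ j. -/

import Mathlib

open Real Matrix

/-- Submatrix of the columns of `D` indexed by `J`. -/
def colSub {m p : ℕ} (D : Matrix (Fin m) (Fin p) ℝ) (J : Finset (Fin p)) :
    Matrix (Fin m) {j // j ∈ J} ℝ := fun i j => D i j.1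

/-- Gram matrix of the columns of `D` indexed by `J`. -/
def gram {m p : ℕ} (D : Matrix (Fin m) (Fin p) ℝ) (J : Finset (Fin p)) :
    Matrix {j // j ∈ J} {j // j ∈ J} ℝ := (colSub D J)ᵀ * colSub D J

/-- Entrywise off-diagonal bounds on `Θ_J = (D_Jᵀ D_J)⁻¹` and on `Θ_J²` for an
incoherent dictionary. -/
theorem stmt_7 {m p : ℕ} (k : ℕ) (D : Matrix (Fin m) (Fin p) ℝ) (μ : ℝ)
    (hcol : ∀ j, ∑ i, (D i j) ^ 2 = 1)
    (hμ : ∀ i j, i ≠ j → |∑ l, D l i * D l j| ≤ μ)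
    (hkμ : (k : ℝ) * μ < 1)
    (J : Finset (Fin p)) (hJ : J.card ≤ k) :
    ∀ a b : {j // j ∈ J}, a ≠ b →
      |(gram D J)⁻¹ a b| ≤ μ / (1 - (k : ℝ) * μ) ∧
      |((gram D J)⁻¹ * (gram D J)⁻¹) a b| ≤ 2 * μ / (1 - (k : ℝ) * μ) ^ 2 := by
  classical
  intro a b hab
  have hμ0 : 0 ≤ μ :=
    le_trans (abs_nonneg _) (hμ a.1 b.1 (fun h => hab (Subtype.ext h)))
  set n : ℕ := J.card with hn
  have hcard : Fintype.card {j // j ∈ J} = n := Fintype.card_coe J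
  have hn1 : 1 ≤ n := Finset.card_pos.2 ⟨a.1, a.2⟩
  set G := gram D J with hGdef
  have hGa : ∀ i j : {j // j ∈ J}, G i j = ∑ l, D l i.1 * D l j.1 := by
    intro i j
    simp [hGdef, _root_.gram, Matrix.mul_apply, colSub, Matrix.transpose_apply]
  have hGdiag : ∀ i : {j // j ∈ J}, G i i = 1 := by
    intro i; rw [hGa]; simpa [sq] using hcol i.1
  have hGoff : ∀ i j : {j // j ∈ J}, i ≠ j → |G i j| ≤ μ := by
    intro i j hij; rw [hGa]; exact hμ i.1 j.1 (fun h => hij (Subtype.ext h))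
  have hnk : (n : ℝ) ≤ (k : ℝ) := Nat.cast_le.2 hJ
  have hβpos : 0 < 1 - ((n : ℝ) - 1) * μ := by nlinarith
  have hkβ : 0 < 1 - (k : ℝ) * μ := by linarith
  have hβle : 1 - (k : ℝ) * μ ≤ 1 - ((n : ℝ) - 1) * μ := by nlinarith
  -- invertibility via Gershgorin
  have hrow : ∀ i : {j // j ∈ J},
      ∑ c ∈ Finset.univ.erase i, ‖G i c‖ < ‖G i i‖ := by
    intro i
    have h1 : ∑ c ∈ Finset.univ.erase i, ‖G i c‖ ≤ ((n : ℝ) - 1) * μ := by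
      have h2 : ∑ c ∈ Finset.univ.erase i, ‖G i c‖ ≤
          (Finset.univ.erase i).card • μ :=
        Finset.sum_le_card_nsmul _ _ μ (fun c hc => by
          rw [Real.norm_eq_abs]
          exact hGoff i c (Ne.symm (Finset.ne_of_mem_erase hc)))
      have h3 : (Finset.univ.erase i).card = n - 1 := by
        rw [Finset.card_erase_of_mem (Finset.mem_univ i), Finset.card_univ, hcard]
      rw [h3, nsmul_eq_mul] at h2
      have h4 : ((n - 1 : ℕ) : ℝ) = (n : ℝ) - 1 := by
        push_cast [Nat.cast_sub hn1]; ring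
      rw [h4] at h2
      exact h2
    rw [hGdiag, norm_one]
    nlinarith
  have hdet : IsUnit G.det :=
    isUnit_iff_ne_zero.2 (det_ne_zero_of_sum_row_lt_diag (A := G) hrow)
  set Θ := G⁻¹ with hΘdef
  have hmul : G * Θ = 1 := Matrix.mul_nonsing_inv G hdet
  -- key entrywise identity
  have key : ∀ i j : {j // j ∈ J}, Θ i j =
      (if i = j then (1 : ℝ) else 0) - ∑ c ∈ Finset.univ.erase i, G i c * Θ c j := by
    intro i j
    have h1 : ∑ c, G i c * Θ c j = if i = j then (1 : ℝ) else 0 := by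
      have := congrFun (congrFun hmul i) j
      simpa [Matrix.mul_apply, Matrix.one_apply] using this
    rw [← Finset.add_sum_erase _ _ (Finset.mem_univ i), hGdiag, one_mul] at h1
    linarith
  set S : {j // j ∈ J} → ℝ := fun j => ∑ c, |Θ c j| with hSdef
  have habs : ∀ i j : {j // j ∈ J},
      |Θ i j| ≤ (if i = j then (1 : ℝ) else 0) + μ * (S j - |Θ i j|) := by
    intro i j
    have h2 : |∑ c ∈ Finset.univ.erase i, G i c * Θ c j| ≤
        μ * (S j - |Θ i j|) := by
      calc |∑ c ∈ Finset.univ.erase i, G i c * Θ c j|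
          ≤ ∑ c ∈ Finset.univ.erase i, |G i c * Θ c j| :=
            Finset.abs_sum_le_sum_abs _ _
        _ ≤ ∑ c ∈ Finset.univ.erase i, μ * |Θ c j| := by
            refine Finset.sum_le_sum (fun c hc => ?_)
            rw [abs_mul]
            exact mul_le_mul_of_nonneg_right
              (hGoff i c (Ne.symm (Finset.ne_of_mem_erase hc))) (abs_nonneg _)
        _ = μ * (S j - |Θ i j|) := by
            rw [← Finset.mul_sum, Finset.sum_erase_eq_sub (Finset.mem_univ i)]
    calc |Θ i j| = |(if i = j then (1 : ℝ) else 0) -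
        ∑ c ∈ Finset.univ.erase i, G i c * Θ c j| := by rw [key]
      _ ≤ |(if i = j then (1 : ℝ) else 0)| +
        |∑ c ∈ Finset.univ.erase i, G i c * Θ c j| := abs_sub _ _
      _ ≤ (if i = j then (1 : ℝ) else 0) + μ * (S j - |Θ i j|) := by
          have : |(if i = j then (1 : ℝ) else 0)| = if i = j then (1 : ℝ) else 0 := by
            split_ifs <;> simp
          rw [this]
          linarith
  -- column sum bound
  have hS : ∀ j : {j // j ∈ J}, S j ≤ 1 / (1 - ((n : ℝ) - 1) * μ) := by
    intro j
    have h1 : S j ≤ 1 + μ * ((n : ℝ) * S j - S j) := by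
      calc S j = ∑ i, |Θ i j| := rfl
        _ ≤ ∑ i, ((if i = j then (1 : ℝ) else 0) + μ * (S j - |Θ i j|)) :=
            Finset.sum_le_sum (fun i _ => habs i j)
        _ = 1 + μ * ((n : ℝ) * S j - S j) := by
            have e1 : ∑ i : {j // j ∈ J}, (if i = j then (1 : ℝ) else 0) = 1 := by simp
            have e2 : ∑ i : {j // j ∈ J}, (S j - |Θ i j|) = (n : ℝ) * S j - S j := by
              rw [Finset.sum_sub_distrib, Finset.sum_const, Finset.card_univ, hcard,
                nsmul_eq_mul]
            rw [Finset.sum_add_distrib, e1, ← Finset.mul_sum, e2]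
    rw [le_div_iff₀ hβpos]
    nlinarith
  have hSnn : ∀ j : {j // j ∈ J}, 0 ≤ S j := fun j =>
    Finset.sum_nonneg (fun c _ => abs_nonneg _)
  -- all-entries bound
  have hall : ∀ i j : {j // j ∈ J}, |Θ i j| ≤ 1 / (1 - ((n : ℝ) - 1) * μ) := by
    intro i j
    have h1 : |Θ i j| ≤ S j :=
      Finset.single_le_sum (f := fun c => |Θ c j|) (fun c _ => abs_nonneg _)
        (Finset.mem_univ i)
    exact h1.trans (hS j)
  -- off-diagonal bound
  have hoff : ∀ i j : {j // j ∈ J}, i ≠ j →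
      |Θ i j| ≤ μ * (1 / (1 - ((n : ℝ) - 1) * μ)) := by
    intro i j hij
    have h1 := habs i j
    rw [if_neg hij] at h1
    have h2 : |Θ i j| ≤ μ * S j := by nlinarith [abs_nonneg (Θ i j)]
    exact h2.trans (mul_le_mul_of_nonneg_left (hS j) hμ0)
  have hBpos : 0 < 1 / (1 - ((n : ℝ) - 1) * μ) := by positivity
  constructor
  · calc |Θ a b| ≤ μ * (1 / (1 - ((n : ℝ) - 1) * μ)) := hoff a b hab
      _ = μ / (1 - ((n : ℝ) - 1) * μ) := by ring
      _ ≤ μ / (1 - (k : ℝ) * μ) := by gcongr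
  · set B : ℝ := 1 / (1 - ((n : ℝ) - 1) * μ) with hBdef
    have hmain : |(Θ * Θ) a b| ≤ 2 * μ * (B * B) := by
      calc |(Θ * Θ) a b| = |∑ c, Θ a c * Θ c b| := by rw [Matrix.mul_apply]
        _ ≤ ∑ c, |Θ a c * Θ c b| := Finset.abs_sum_le_sum_abs _ _
        _ = |Θ a a * Θ a b| + ∑ c ∈ Finset.univ.erase a, |Θ a c * Θ c b| :=
            (Finset.add_sum_erase _ _ (Finset.mem_univ a)).symm
        _ ≤ B * (μ * B) + ∑ c ∈ Finset.univ.erase a, (μ * B) * |Θ c b| := by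
            gcongr with c hc
            · rw [abs_mul]
              exact mul_le_mul (hall a a) (hoff a b hab) (abs_nonneg _) hBpos.le
            · rw [abs_mul]
              exact mul_le_mul_of_nonneg_right
                (hoff a c (Ne.symm (Finset.ne_of_mem_erase hc))) (abs_nonneg _)
        _ ≤ B * (μ * B) + (μ * B) * S b := by
            rw [← Finset.mul_sum]
            have h1 : ∑ c ∈ Finset.univ.erase a, |Θ c b| ≤ S b :=
              Finset.sum_le_sum_of_subset_of_nonneg (Finset.subset_univ _)
                (fun c _ _ => abs_nonneg _)
            have h2 : 0 ≤ μ * B := by positivity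
            nlinarith
        _ ≤ 2 * μ * (B * B) := by
            have := hS b
            have h2 : 0 ≤ μ * B := by positivity
            nlinarith
    calc |(Θ * Θ) a b| ≤ 2 * μ * (B * B) := hmain
      _ = 2 * μ / (1 - ((n : ℝ) - 1) * μ) ^ 2 := by
          rw [hBdef]
          field_simp
      _ ≤ 2 * μ / (1 - (k : ℝ) * μ) ^ 2 := by gcongr
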